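/- arXiv:1711.08409 — 2 statements merged into one kernel-verified Lean document; each statement's English description precedes it below -/
import Mathlib

section
/- Let A be a pseudo-hoop. Then A is a Wajsberg pseudo-hoop if and only if for all x, y ∈ A with x ≤ y, one has y = (x→y)⇝y and y = (x⇝y)→y. -/
universe u v

class PseudoHoop (A : Type u) extends One A, Mul A where
  rimp : A → A → A
  limp : A → A → A
  mul_one' : ∀ x : A, x * 1 = x
  one_mul' : ∀ x : A, 1 * x = x
  rimp_self : ∀ x : A, rimp x x = 1
  limp_self : ∀ x : A, limp x x = 1
  mul_rimp : ∀ x y z : A, rimp (x * y) z = rimp x (rimp y z)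
  mul_limp : ∀ x y z : A, limp (x * y) z = limp y (limp x z)
  div₁ : ∀ x y : A, (rimp x y) * x = (rimp y x) * y
  div₂ : ∀ x y : A, (rimp x y) * x = x * (limp x y)
  div₃ : ∀ x y : A, x * (limp x y) = y * (limp y x)

namespace PseudoHoop

/-- The order on a pseudo-hoop: `x ≤ y` iff `x → y = 1`. -/
def ple {A : Type u} [PseudoHoop A] (x y : A) : Prop := rimp x y = 1

/-- The meet `x ∧ y = (x → y) ⊙ x`. -/
def meet {A : Type u} [PseudoHoop A] (x y : A) : A := (rimp x y) * x

/-- `x ∨₁ y = (x → y) ⇝ y`. -/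
def join₁ {A : Type u} [PseudoHoop A] (x y : A) : A := limp (rimp x y) y

/-- `x ∨₂ y = (x ⇝ y) → y`. -/
def join₂ {A : Type u} [PseudoHoop A] (x y : A) : A := rimp (limp x y) y

/-- Iterated implication: `x →⁰ y = y`, `x →ⁿ⁺¹ y = x → (x →ⁿ y)`. -/
def rimpPow {A : Type u} [PseudoHoop A] (x : A) : ℕ → A → A
  | 0, y => y
  | n + 1, y => rimp x (rimpPow x n y)

/-- A filter of a pseudo-hoop. -/
structure IsFilter {A : Type u} [PseudoHoop A] (F : Set A) : Prop where
  nonempty : F.Nonempty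
  mul_mem : ∀ {x y : A}, x ∈ F → y ∈ F → x * y ∈ F
  upward : ∀ {x y : A}, x ∈ F → ple x y → y ∈ F

/-- A normal filter: `x → y ∈ F` iff `x ⇝ y ∈ F`. -/
def IsNormalFilter {A : Type u} [PseudoHoop A] (F : Set A) : Prop :=
  IsFilter F ∧ ∀ x y : A, rimp x y ∈ F ↔ limp x y ∈ F

def IsProper {A : Type u} [PseudoHoop A] (F : Set A) : Prop := F ≠ Set.univ

/-- A pseudo-hoop is simple if `{1}` is its unique proper filter. -/
def IsSimple (A : Type u) [PseudoHoop A] : Prop :=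
  ∀ F : Set A, IsFilter F → IsProper F → F = {1}

/-- A pseudo-hoop is Wajsberg if `x ∨₁ y = y ∨₁ x` and `x ∨₂ y = y ∨₂ x`. -/
def IsWajsberg (A : Type u) [PseudoHoop A] : Prop :=
  ∀ x y : A, join₁ x y = join₁ y x ∧ join₂ x y = join₂ y x

/-- A fantastic filter. -/
def IsFantasticFilter {A : Type u} [PseudoHoop A] (F : Set A) : Prop :=
  IsFilter F ∧ ∀ x y : A,
    (rimp y x ∈ F → rimp (join₁ x y) x ∈ F) ∧
    (limp y x ∈ F → limp (join₂ x y) x ∈ F)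

def IS₂ {A : Type u} [PseudoHoop A] (μ : A → A) : Prop :=
  ∀ x y : A, μ (x * y) = μ x * μ (limp x (x * y)) ∧
    μ (x * y) = μ (rimp y (x * y)) * μ y

def IS₃ {A : Type u} [PseudoHoop A] (μ : A → A) : Prop :=
  ∀ x y : A, μ (μ x * μ y) = μ x * μ y

def IS₄ {A : Type u} [PseudoHoop A] (μ : A → A) : Prop :=
  ∀ x y : A, μ (rimp (μ x) (μ y)) = rimp (μ x) (μ y) ∧
    μ (limp (μ x) (μ y)) = limp (μ x) (μ y)

/-- Type I state operator. -/
def IsStateI {A : Type u} [PseudoHoop A] (μ : A → A) : Prop :=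
  (∀ x y : A, μ (rimp x y) = rimp (μ (join₁ x y)) (μ y) ∧
      μ (limp x y) = limp (μ (join₂ x y)) (μ y)) ∧ IS₂ μ ∧ IS₃ μ ∧ IS₄ μ

/-- Type II state operator. -/
def IsStateII {A : Type u} [PseudoHoop A] (μ : A → A) : Prop :=
  (∀ x y : A, μ (rimp x y) = rimp (μ (join₁ y x)) (μ y) ∧
      μ (limp x y) = limp (μ (join₂ y x)) (μ y)) ∧ IS₂ μ ∧ IS₃ μ ∧ IS₄ μ

/-- Type III state operator. -/
def IsStateIII {A : Type u} [PseudoHoop A] (μ : A → A) : Prop :=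
  (∀ x y : A, μ (rimp x y) = rimp (μ x) (μ (meet x y)) ∧
      μ (limp x y) = limp (μ x) (μ (meet x y))) ∧ IS₂ μ ∧ IS₃ μ ∧ IS₄ μ

end PseudoHoop

open PseudoHoop

/-- A bounded pseudo-hoop: a pseudo-hoop with a least element `0`. -/
class BoundedPseudoHoop (A : Type u) extends PseudoHoop A, Zero A where
  zero_le : ∀ x : A, rimp 0 x = 1

namespace BoundedPseudoHoop

/-- `x⁻ = x → 0`. -/
def negr {A : Type u} [BoundedPseudoHoop A] (x : A) : A := rimp x 0

/-- `x∼ = x ⇝ 0`. -/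
def negl {A : Type u} [BoundedPseudoHoop A] (x : A) : A := limp x 0

/-- A bounded pseudo-hoop is good if `x⁻∼ = x∼⁻` for all `x`. -/
def IsGood (A : Type u) [BoundedPseudoHoop A] : Prop :=
  ∀ x : A, negl (negr x) = negr (negl x)

/-- A bounded pseudo-hoop is involutive if `x⁻∼ = x∼⁻ = x` for all `x`. -/
def IsInvolutive (A : Type u) [BoundedPseudoHoop A] : Prop :=
  ∀ x : A, negl (negr x) = x ∧ negr (negl x) = x

/-- The set of dense elements. -/
def Den (A : Type u) [BoundedPseudoHoop A] : Set A :=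
  {x : A | negl (negr x) = 1}

/-- An involutive filter: `x⁻∼ → x ∈ F` and `x∼⁻ ⇝ x ∈ F` for all `x`. -/
def IsInvolutiveFilter {A : Type u} [BoundedPseudoHoop A] (F : Set A) : Prop :=
  IsFilter F ∧ ∀ x : A, rimp (negl (negr x)) x ∈ F ∧ limp (negr (negl x)) x ∈ F

end BoundedPseudoHoop

open BoundedPseudoHoop

section WajsbergAux

open PseudoHoop

variable {A : Type u} [PseudoHoop A]

private lemma w_r1 (x : A) : rimp (1 : A) x = rimp x 1 * x := by
  have h := div₁ (A := A) x 1
  rw [mul_one'] at h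
  exact h.symm

private lemma w_ra1 (x : A) : rimp (rimp x (1 : A)) 1 = 1 := by
  have h1 : rimp (1 : A) (rimp x 1) = rimp x 1 := by
    have h := mul_rimp (A := A) 1 x 1
    rw [one_mul'] at h
    exact h.symm
  have h2 : rimp (rimp x (1 : A)) 1 * rimp x 1 = rimp x 1 := by
    rw [← w_r1 (rimp x 1), h1]
  have h3 : rimp (rimp (rimp x (1 : A)) 1 * rimp x 1) 1 = 1 := by
    rw [mul_rimp, rimp_self]
  rwa [h2] at h3

private lemma w_antisymm {x y : A} (h1 : rimp x y = 1) (h2 : rimp y x = 1) : x = y := by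
  have h := div₁ (A := A) x y
  rw [h1, h2, one_mul', one_mul'] at h
  exact h

private lemma one_rimp (x : A) : rimp (1 : A) x = x := by
  apply w_antisymm
  · rw [w_r1, mul_rimp, rimp_self, w_ra1]
  · have h := mul_rimp (A := A) x 1 x
    rw [mul_one', rimp_self] at h
    exact h.symm

private lemma rimp_one (x : A) : rimp x (1 : A) = 1 := by
  have hx : rimp x (1 : A) * x = x := by rw [← w_r1, one_rimp]
  have h : rimp (rimp x (1 : A) * x) 1 = 1 := by rw [mul_rimp, rimp_self]
  rwa [hx] at h

private lemma one_limp (x : A) : limp (1 : A) x = x := by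
  have h2 := div₂ (A := A) x 1
  have h3 := div₃ (A := A) x 1
  rw [rimp_one, one_mul'] at h2
  rw [one_mul'] at h3
  rw [← h3, ← h2]

private lemma limp_one (x : A) : limp x (1 : A) = 1 := by
  have hx : x * limp x (1 : A) = x := by
    have h3 := div₃ (A := A) x 1
    rw [one_mul', one_limp] at h3
    exact h3
  have h : limp (x * limp x (1 : A)) 1 = 1 := by rw [mul_limp, limp_self]
  rwa [hx] at h

private lemma r_to_l {x y : A} (h : rimp x y = 1) : limp x y = 1 := by
  have hd := div₂ (A := A) x y
  rw [h, one_mul'] at hd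
  have h2 : limp (x * limp x y) y = 1 := by rw [mul_limp, limp_self]
  rwa [← hd] at h2

private lemma l_to_r {x y : A} (h : limp x y = 1) : rimp x y = 1 := by
  have hd := div₂ (A := A) x y
  rw [h, mul_one'] at hd
  have h2 : rimp (rimp x y * x) y = 1 := by rw [mul_rimp, rimp_self]
  rwa [hd] at h2

private lemma trans_r {a b c : A} (h1 : rimp a b = 1) (h2 : rimp b c = 1) : rimp a c = 1 := by
  have hd := div₁ (A := A) a b
  rw [h1, one_mul'] at hd
  have h3 : rimp (rimp b a * b) c = 1 := by rw [mul_rimp, h2, rimp_one]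
  rwa [← hd] at h3

private lemma trans_l {a b c : A} (h1 : limp a b = 1) (h2 : limp b c = 1) : limp a c = 1 := by
  have hd := div₃ (A := A) a b
  rw [h1, mul_one'] at hd
  have h3 : limp (b * limp b a) c = 1 := by rw [mul_limp, h2, limp_one]
  rwa [← hd] at h3

private lemma mono_mul_right_l {a b : A} (u : A) (h : limp a b = 1) :
    limp (u * a) (u * b) = 1 := by
  rw [mul_limp]
  apply trans_l h
  rw [← mul_limp, limp_self]

private lemma mono_mul_left_r {a b : A} (u : A) (h : rimp a b = 1) :
    rimp (a * u) (b * u) = 1 := by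
  rw [mul_rimp]
  apply trans_r h
  rw [← mul_rimp, rimp_self]

private lemma antitone_r {a b : A} (c : A) (h : rimp a b = 1) :
    rimp (rimp b c) (rimp a c) = 1 := by
  rw [← mul_rimp]
  apply l_to_r
  apply trans_l (mono_mul_right_l (rimp b c) (r_to_l h))
  apply r_to_l
  rw [mul_rimp, rimp_self]

private lemma antitone_l {a b : A} (c : A) (h : limp a b = 1) :
    limp (limp b c) (limp a c) = 1 := by
  rw [← mul_limp]
  apply r_to_l
  apply trans_r (mono_mul_left_r (limp b c) (l_to_r h))
  apply l_to_r
  rw [mul_limp, limp_self]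

private lemma le_join₁_left (x y : A) : rimp x (join₁ x y) = 1 := by
  apply l_to_r
  show limp x (limp (rimp x y) y) = 1
  rw [← mul_limp, div₂, mul_limp, limp_self]

private lemma le_join₁_right (x y : A) : rimp y (join₁ x y) = 1 := by
  apply l_to_r
  show limp y (limp (rimp x y) y) = 1
  rw [← mul_limp]
  apply r_to_l
  rw [mul_rimp, rimp_self, rimp_one]

private lemma le_join₂_left (x y : A) : rimp x (join₂ x y) = 1 := by
  show rimp x (rimp (limp x y) y) = 1
  rw [← mul_rimp, ← div₂, mul_rimp, rimp_self]

private lemma le_join₂_right (x y : A) : rimp y (join₂ x y) = 1 := by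
  show rimp y (rimp (limp x y) y) = 1
  rw [← mul_rimp]
  apply l_to_r
  rw [mul_limp, limp_self, limp_one]

private lemma join₁_le (H : ∀ x y : A, ple x y → (y = join₁ y x ∧ y = join₂ y x))
    (x y : A) : rimp (join₁ y x) (join₁ x y) = 1 := by
  set u := join₁ x y with hu_def
  have hx : ple x u := le_join₁_left x y
  have hy : rimp y u = 1 := le_join₁_right x y
  have hu : u = join₁ u x := (H x u hx).1
  have h1 : rimp (rimp u x) (rimp y x) = 1 := antitone_r x hy
  have h2 : limp (limp (rimp y x) x) (limp (rimp u x) x) = 1 :=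
    antitone_l x (r_to_l h1)
  have h3 : rimp (limp (rimp y x) x) (limp (rimp u x) x) = 1 := l_to_r h2
  show rimp (limp (rimp y x) x) u = 1
  rw [hu]
  exact h3

private lemma join₂_le (H : ∀ x y : A, ple x y → (y = join₁ y x ∧ y = join₂ y x))
    (x y : A) : rimp (join₂ y x) (join₂ x y) = 1 := by
  set u := join₂ x y with hu_def
  have hx : ple x u := le_join₂_left x y
  have hy : rimp y u = 1 := le_join₂_right x y
  have hu : u = join₂ u x := (H x u hx).2
  have h1 : limp (limp u x) (limp y x) = 1 := antitone_l x (r_to_l hy)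
  have h2 : rimp (rimp (limp y x) x) (rimp (limp u x) x) = 1 :=
    antitone_r x (l_to_r h1)
  show rimp (rimp (limp y x) x) u = 1
  rw [hu]
  exact h2

end WajsbergAux

theorem stmt6 {A : Type u} [PseudoHoop A] :
    IsWajsberg A ↔ ∀ x y : A, ple x y → (y = join₁ y x ∧ y = join₂ y x) := by
  constructor
  · intro h x y hxy
    constructor
    · rw [(h y x).1]
      show y = limp (rimp x y) y
      rw [show rimp x y = 1 from hxy, one_limp]
    · rw [(h y x).2]
      show y = rimp (limp x y) y
      rw [r_to_l (show rimp x y = 1 from hxy), one_rimp]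
  · intro H x y
    exact ⟨w_antisymm (join₁_le H y x) (join₁_le H x y),
      w_antisymm (join₂_le H y x) (join₂_le H x y)⟩
end

section
/- Let A be a pseudo-hoop and F a normal filter of A. Then F is a fantastic filter if and only if A/F is a Wajsberg pseudo-hoop. -/
universe u v

open PseudoHoop

open BoundedPseudoHoop

section Aux

variable {A : Type u} [PseudoHoop A]

lemma ph_antisym {a b : A} (h1 : rimp a b = 1) (h2 : rimp b a = 1) : a = b := by
  have h := div₁ a b
  rw [h1, h2, one_mul', one_mul'] at h
  exact h

lemma ph_r1 (x y : A) : rimp 1 (rimp x y) = rimp x y := by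
  have h := mul_rimp (1 : A) x y
  rw [one_mul'] at h
  exact h.symm

lemma ph_l1 (x y : A) : limp 1 (limp x y) = limp x y := by
  have h := mul_limp x (1 : A) y
  rw [mul_one'] at h
  exact h.symm

lemma ph_r2 (x : A) : rimp x (rimp 1 x) = 1 := by
  have h := mul_rimp x (1 : A) x
  rw [mul_one', rimp_self] at h
  exact h.symm

lemma ph_r3 (x : A) : rimp 1 x = rimp x 1 * x := by
  have h := div₁ x (1 : A)
  rw [mul_one'] at h
  exact h.symm

lemma ph_l2 (x : A) : limp x (limp 1 x) = 1 := by
  have h := mul_limp (1 : A) x x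
  rw [one_mul', limp_self] at h
  exact h.symm

lemma ph_l3 (x : A) : limp 1 x = x * limp x 1 := by
  have h := div₃ (1 : A) x
  rw [one_mul'] at h
  exact h

lemma ph_massoc (x y z : A) : (x * y) * z = x * (y * z) := by
  have key : ∀ w : A, rimp ((x * y) * z) w = rimp (x * (y * z)) w := by
    intro w
    rw [mul_rimp, mul_rimp, mul_rimp, mul_rimp]
  apply ph_antisym
  · rw [key (x * (y * z))]; exact rimp_self _
  · rw [← key ((x * y) * z)]; exact rimp_self _

lemma ph_one_rimp (x : A) : rimp 1 x = x := by
  have h2 : rimp x (rimp 1 x) = 1 := ph_r2 x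
  have hd := div₁ x (rimp 1 x)
  rw [h2, one_mul'] at hd
  -- hd : x = rimp (rimp 1 x) x * rimp 1 x
  have hu : rimp 1 x = rimp x 1 * x := ph_r3 x
  have h5 : rimp (rimp 1 x) x = rimp (rimp x 1) 1 := by
    rw [hu, mul_rimp, rimp_self]
  rw [h5, hu] at hd
  have h7 : rimp (rimp x 1) 1 * rimp x 1 = rimp x 1 := by
    have h := ph_r3 (rimp x 1)
    rw [ph_r1] at h
    exact h.symm
  rw [← ph_massoc, h7, ← hu] at hd
  exact hd.symm

lemma ph_rimp_one (x : A) : rimp x 1 = 1 := by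
  have h : rimp x 1 * x = x := by rw [← ph_r3, ph_one_rimp]
  calc rimp x 1 = rimp (rimp x 1 * x) 1 := by rw [h]
    _ = rimp (rimp x 1) (rimp x 1) := by rw [mul_rimp]
    _ = 1 := rimp_self _

lemma ph_one_limp (x : A) : limp 1 x = x := by
  have h2 : limp x (limp 1 x) = 1 := ph_l2 x
  have hd := div₃ x (limp 1 x)
  rw [h2, mul_one'] at hd
  -- hd : x = limp 1 x * limp (limp 1 x) x
  have hu : limp 1 x = x * limp x 1 := ph_l3 x
  have h5 : limp (limp 1 x) x = limp (limp x 1) 1 := by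
    rw [hu, mul_limp, limp_self]
  rw [h5, hu] at hd
  have h7 : limp x 1 * limp (limp x 1) 1 = limp x 1 := by
    have h := ph_l3 (limp x 1)
    rw [ph_l1] at h
    exact h.symm
  rw [ph_massoc, h7, ← hu] at hd
  exact hd.symm

lemma ph_limp_one (x : A) : limp x 1 = 1 := by
  have h : x * limp x 1 = x := by rw [← ph_l3, ph_one_limp]
  calc limp x 1 = limp (x * limp x 1) 1 := by rw [h]
    _ = limp (limp x 1) (limp x 1) := by rw [mul_limp]
    _ = 1 := limp_self _

lemma ph_r_iff_l {x y : A} : rimp x y = 1 ↔ limp x y = 1 := by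
  constructor
  · intro h
    have h2 := div₂ x y
    rw [h, one_mul'] at h2
    -- h2 : x = x * limp x y
    have h3 := div₃ x y
    have hx : x = y * limp y x := h2.trans h3
    calc limp x y = limp (y * limp y x) y := by conv_lhs => rw [hx]
      _ = limp (limp y x) (limp y y) := by rw [mul_limp]
      _ = 1 := by rw [limp_self, ph_limp_one]
  · intro h
    have h2 := div₂ x y
    rw [h, mul_one'] at h2
    -- h2 : rimp x y * x = x
    have h1 := div₁ x y
    have hx : x = rimp y x * y := h2.symm.trans h1
    calc rimp x y = rimp (rimp y x * y) y := by conv_lhs => rw [hx]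
      _ = rimp (rimp y x) (rimp y y) := by rw [mul_rimp]
      _ = 1 := by rw [rimp_self, ph_rimp_one]

lemma ph_trans {x y z : A} (h1 : rimp x y = 1) (h2 : rimp y z = 1) :
    rimp x z = 1 := by
  have hd := div₁ x y
  rw [h1, one_mul'] at hd
  -- hd : x = rimp y x * y
  calc rimp x z = rimp (rimp y x * y) z := by rw [← hd]
    _ = rimp (rimp y x) (rimp y z) := by rw [mul_rimp]
    _ = 1 := by rw [h2, ph_rimp_one]

lemma ph_le_rimp (u v : A) : rimp u (rimp v u) = 1 := by
  rw [← mul_rimp]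
  apply ph_r_iff_l.mpr
  rw [mul_limp, limp_self, ph_limp_one]

lemma ph_le_limp (u v : A) : limp u (limp v u) = 1 := by
  rw [← mul_limp]
  apply ph_r_iff_l.mp
  rw [mul_rimp, rimp_self, ph_rimp_one]

lemma ph_r_antitone {a b : A} (h : rimp a b = 1) (w : A) :
    rimp (rimp b w) (rimp a w) = 1 := by
  have hd := div₁ a b
  rw [h, one_mul'] at hd
  -- hd : a = rimp b a * b
  have h2 : rimp a w = rimp (rimp b a) (rimp b w) := by
    conv_lhs => rw [hd]
    rw [mul_rimp]
  rw [h2]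
  exact ph_le_rimp _ _

lemma ph_l_antitone {a b : A} (h : rimp a b = 1) (w : A) :
    rimp (limp b w) (limp a w) = 1 := by
  have hl : limp a b = 1 := ph_r_iff_l.mp h
  have hd := div₃ a b
  rw [hl, mul_one'] at hd
  -- hd : a = b * limp b a
  have h2 : limp a w = limp (limp b a) (limp b w) := by
    conv_lhs => rw [hd]
    rw [mul_limp]
  rw [h2]
  exact ph_r_iff_l.mpr (ph_le_limp _ _)

lemma ph_chain_r (a b c : A) :
    rimp (rimp b c * rimp a b) (rimp a c) = 1 := by
  rw [mul_rimp]
  have h : rimp (rimp a b) (rimp a c) = rimp (rimp a b * a) c := by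
    rw [mul_rimp]
  rw [h]
  have hm : rimp (rimp a b * a) b = 1 := by
    rw [mul_rimp]; exact rimp_self _
  exact ph_r_antitone hm c

lemma ph_chain_l (a b c : A) :
    rimp (limp a b * limp b c) (limp a c) = 1 := by
  apply ph_r_iff_l.mpr
  rw [mul_limp]
  have h : limp (limp a b) (limp a c) = limp (a * limp a b) c := by
    rw [mul_limp]
  rw [h]
  have hm : rimp (a * limp a b) b = 1 := by
    apply ph_r_iff_l.mpr
    rw [mul_limp]; exact limp_self _
  exact ph_r_iff_l.mp (ph_l_antitone hm c)

lemma ph_one_mem {F : Set A} (hFil : IsFilter F) : (1 : A) ∈ F := by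
  obtain ⟨c, hc⟩ := hFil.nonempty
  exact hFil.upward hc (ph_rimp_one c)

end Aux

/-- `F` is fantastic iff `A/F` is Wajsberg; the latter is expressed via the
congruence `Θ_F`: `[x] ∨₁ [y] = [y] ∨₁ [x]` and `[x] ∨₂ [y] = [y] ∨₂ [x]` in `A/F`
means `(x ∨₁ y) Θ_F (y ∨₁ x)` and `(x ∨₂ y) Θ_F (y ∨₂ x)`. -/
theorem stmt14 {A : Type u} [PseudoHoop A] (F : Set A) (hF : IsNormalFilter F) :
    IsFantasticFilter F ↔ ∀ x y : A,
      (rimp (join₁ x y) (join₁ y x) ∈ F ∧ rimp (join₁ y x) (join₁ x y) ∈ F) ∧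
      (rimp (join₂ x y) (join₂ y x) ∈ F ∧ rimp (join₂ y x) (join₂ x y) ∈ F) := by
  obtain ⟨hFil, hNorm⟩ := hF
  have one_mem : (1 : A) ∈ F := ph_one_mem hFil
  constructor
  · rintro ⟨-, hFan⟩
    have key1 : ∀ x y : A, rimp (join₁ x y) (join₁ y x) ∈ F := by
      intro x y
      set c : A := rimp y x with hc
      set a : A := join₁ y x with ha
      have ha' : a = limp c x := rfl
      have hxa : rimp x a = 1 := by
        rw [ha']
        apply ph_r_iff_l.mpr
        have h : limp (c * x) x = limp x (limp c x) := mul_limp c x x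
        rw [← h]
        apply ph_r_iff_l.mp
        rw [mul_rimp, rimp_self, ph_rimp_one]
      have hya : rimp y a = 1 := by
        rw [ha']
        apply ph_r_iff_l.mpr
        have h : limp (c * y) x = limp y (limp c x) := mul_limp c y x
        rw [← h]
        apply ph_r_iff_l.mp
        rw [mul_rimp, hc, rimp_self]
      have fant : rimp (join₁ a y) a ∈ F := by
        apply (hFan a y).1
        rw [hya]; exact one_mem
      have mono : rimp (join₁ x y) (join₁ a y) = 1 := by
        have h1 : rimp (rimp a y) (rimp x y) = 1 := ph_r_antitone hxa y
        exact ph_l_antitone h1 y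
      exact hFil.upward fant (ph_r_antitone mono a)
    have key2 : ∀ x y : A, rimp (join₂ x y) (join₂ y x) ∈ F := by
      intro x y
      set d : A := limp y x with hd
      set b : A := join₂ y x with hb
      have hb' : b = rimp d x := rfl
      have hxb : rimp x b = 1 := by
        rw [hb', ← mul_rimp]
        apply ph_r_iff_l.mpr
        rw [mul_limp, limp_self, ph_limp_one]
      have hyb : rimp y b = 1 := by
        rw [hb', ← mul_rimp]
        apply ph_r_iff_l.mpr
        rw [mul_limp, hd, limp_self]
      have fant : limp (join₂ b y) b ∈ F := by
        apply (hFan b y).2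
        rw [ph_r_iff_l.mp hyb]; exact one_mem
      have mono : rimp (join₂ x y) (join₂ b y) = 1 := by
        have h1 : rimp (limp b y) (limp x y) = 1 := ph_l_antitone hxb y
        exact ph_r_antitone h1 y
      have hmem : limp (join₂ x y) b ∈ F :=
        hFil.upward fant (ph_l_antitone mono b)
      exact (hNorm _ _).mpr hmem
    exact fun x y => ⟨⟨key1 x y, key1 y x⟩, ⟨key2 x y, key2 y x⟩⟩
  · intro H
    refine ⟨hFil, fun x y => ⟨fun hyx => ?_, fun hyx => ?_⟩⟩
    · -- hyx : rimp y x ∈ F ⊢ rimp (join₁ x y) x ∈ F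
      have stepA : rimp (join₁ y x) x ∈ F := by
        apply hFil.upward hyx
        show rimp (rimp y x) (rimp (limp (rimp y x) x) x) = 1
        rw [← mul_rimp]
        apply ph_r_iff_l.mpr
        rw [mul_limp]
        exact limp_self _
      have hH : rimp (join₁ x y) (join₁ y x) ∈ F := (H x y).1.1
      have prod := hFil.mul_mem stepA hH
      exact hFil.upward prod (ph_chain_r (join₁ x y) (join₁ y x) x)
    · -- hyx : limp y x ∈ F ⊢ limp (join₂ x y) x ∈ F
      have stepA : limp (join₂ y x) x ∈ F := by
        apply hFil.upward hyx
        show rimp (limp y x) (limp (rimp (limp y x) x) x) = 1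
        apply ph_r_iff_l.mpr
        rw [← mul_limp]
        apply ph_r_iff_l.mp
        rw [mul_rimp]
        exact rimp_self _
      have hH : limp (join₂ x y) (join₂ y x) ∈ F := (hNorm _ _).mp (H x y).2.1
      have prod := hFil.mul_mem hH stepA
      exact hFil.upward prod (ph_chain_l (join₂ x y) (join₂ y x) x)
end
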